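/- A function u ∈ L¹(I,μ) satisfies ∑_{k=1}^{N!} u(x_k) ≥ (N-1)!·S(x_1,…,x_{N!}) for all (x_1,…,x_{N!}) ∈ I^{N!} if and only if for every n ∈ {N',…,N} and every (y_1,…,y_n) ∈ I^n one has ∑_{k=1}^n u(y_k) ≥ s_n(y_1,…,y_n); that is, the dual set Û defined via S equals the intersection over n of the dual sets U_n defined via the s_n. -/

import Mathlib

open MeasureTheory

/-- The multiset of coordinates of a point of `I^m`. -/
def coordMultiset {I : Type*} {m : ℕ} (x : Fin m → I) : Multiset I :=
  Multiset.map x Finset.univ.val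

/-- `x ∈ I^{N!}` is an `N!/n`-fold replication of `y ∈ I^n` if the multiset of
coordinates of `x` equals `N!/n` copies of the multiset of coordinates of `y`. -/
def IsReplication {I : Type*} (N n : ℕ) (x : Fin (Nat.factorial N) → I)
    (y : Fin n → I) : Prop :=
  coordMultiset x = (Nat.factorial N / n) • coordMultiset y

/-- `Ŝ_n(x) = s_n(y)` if `x` is an `N!/n`-fold replication of some `y ∈ I^n`
(well-defined when `s n` is symmetric), and `0` otherwise. -/
noncomputable def Shat {I : Type*} (s : ∀ n : ℕ, (Fin n → I) → ℝ) (N n : ℕ)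
    (x : Fin (Nat.factorial N) → I) : ℝ :=
  letI := Classical.propDecidable (∃ y : Fin n → I, IsReplication N n x y)
  if h : ∃ y : Fin n → I, IsReplication N n x y then s n h.choose else 0

/-- `S = max_{N' ≤ n ≤ N} (N/n)·Ŝ_n` on `I^{N!}`. -/
noncomputable def bigS {I : Type*} (s : ∀ n : ℕ, (Fin n → I) → ℝ) (N' N : ℕ)
    (hNN : N' ≤ N) (x : Fin (Nat.factorial N) → I) : ℝ :=
  (Finset.Icc N' N).sup' (Finset.nonempty_Icc.mpr hNN)
    (fun n => ((N : ℝ) / (n : ℝ)) * Shat s N n x)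

-- composing with an equiv preserves coordMultiset
lemma coordMultiset_comp_equiv {I : Type*} {m k : ℕ} (y : Fin m → I) (e : Fin k ≃ Fin m) :
    coordMultiset (y ∘ e) = coordMultiset y := by
  unfold coordMultiset
  rw [← Multiset.map_map]
  congr 1
  have : (Finset.univ.map e.toEmbedding) = Finset.univ := Finset.map_univ_equiv e
  calc Multiset.map (⇑e) Finset.univ.val = (Finset.univ.map e.toEmbedding).val := rfl
    _ = Finset.univ.val := by rw [this]

lemma coordMultiset_succ {I : Type*} {m : ℕ} (y : Fin (m+1) → I) :
    coordMultiset y = y 0 ::ₘ coordMultiset (y ∘ Fin.succ) := by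
  unfold coordMultiset
  rw [Fin.univ_succ, Finset.cons_val, Multiset.map_cons, Finset.map_val, Multiset.map_map]
  rfl

lemma exists_perm_of_coordMultiset_eq {I : Type*} : ∀ {m : ℕ} (y₁ y₂ : Fin m → I),
    coordMultiset y₁ = coordMultiset y₂ → ∃ σ : Equiv.Perm (Fin m), y₁ = y₂ ∘ σ := by
  intro m
  induction m with
  | zero => intro y₁ y₂ _; exact ⟨1, funext fun i => absurd i.2 (by omega)⟩
  | succ m ih =>
    intro y₁ y₂ h
    have hmem : y₁ 0 ∈ coordMultiset y₂ := by
      rw [← h, coordMultiset_succ]; exact Multiset.mem_cons_self _ _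
    obtain ⟨j, -, hj⟩ := Multiset.mem_map.mp hmem
    set y₂' : Fin (m+1) → I := y₂ ∘ (Equiv.swap 0 j) with hy₂'
    have h2 : coordMultiset y₂' = coordMultiset y₂ :=
      coordMultiset_comp_equiv y₂ (Equiv.swap 0 j)
    have h0 : y₂' 0 = y₁ 0 := by simp [hy₂', Equiv.swap_apply_left, hj]
    have htail : coordMultiset (y₁ ∘ Fin.succ) = coordMultiset (y₂' ∘ Fin.succ) := by
      have := h.trans h2.symm
      rw [coordMultiset_succ y₁, coordMultiset_succ y₂', h0] at this
      exact (Multiset.cons_inj_right _).mp this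
    obtain ⟨τ, hτ⟩ := ih (y₁ ∘ Fin.succ) (y₂' ∘ Fin.succ) htail
    refine ⟨Equiv.Perm.decomposeFin.symm (j, τ), funext fun i => ?_⟩
    refine Fin.cases ?_ (fun i => ?_) i
    · simp [Equiv.Perm.decomposeFin_symm_apply_zero, hj]
    · have := congrFun hτ i
      simp only [Function.comp_apply] at this ⊢
      rw [Equiv.Perm.decomposeFin_symm_apply_succ]
      simpa [hy₂'] using this

lemma map_snd_univ_val {m n : ℕ} :
    Multiset.map Prod.snd (Finset.univ : Finset (Fin m × Fin n)).val
      = m • (Finset.univ : Finset (Fin n)).val := by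
  classical
  ext i
  rw [Multiset.count_map, Multiset.count_nsmul, Multiset.count_univ, mul_one]
  have : (Finset.univ.val.filter fun a : Fin m × Fin n => i = a.2)
      = (Finset.univ.filter fun a : Fin m × Fin n => i = a.2).val := rfl
  rw [this]
  change (Finset.univ.filter fun a : Fin m × Fin n => i = a.2).card = m
  rw [← Fintype.card_subtype]
  have e : {a : Fin m × Fin n // i = a.2} ≃ Fin m :=
    { toFun := fun q => q.1.1
      invFun := fun a => ⟨(a, i), rfl⟩
      left_inv := fun ⟨⟨a, b⟩, h⟩ => by cases h; rfl
      right_inv := fun a => rfl }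
  rw [Fintype.card_congr e, Fintype.card_fin]

lemma nsmul_multiset_cancel {α : Type*} {m : ℕ} (hm : m ≠ 0) {s t : Multiset α}
    (h : m • s = m • t) : s = t := by
  classical
  ext a
  have := congrArg (Multiset.count a) h
  rw [Multiset.count_nsmul, Multiset.count_nsmul] at this
  exact Nat.eq_of_mul_eq_mul_left (Nat.pos_of_ne_zero hm) this

lemma sum_eq_multiset_sum {I : Type*} {m : ℕ} (u : I → ℝ) (x : Fin m → I) :
    ∑ k, u (x k) = ((coordMultiset x).map u).sum := by
  unfold coordMultiset
  rw [Multiset.map_map]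
  rfl

lemma sum_of_replication {I : Type*} {N n : ℕ} {x : Fin (Nat.factorial N) → I}
    {y : Fin n → I} (hrep : IsReplication N n x y) (u : I → ℝ) :
    ∑ k, u (x k) = ((Nat.factorial N / n : ℕ) : ℝ) * ∑ j, u (y j) := by
  rw [sum_eq_multiset_sum, sum_eq_multiset_sum, hrep, Multiset.map_nsmul]
  rw [← Multiset.coe_sumAddMonoidHom, AddMonoidHom.map_nsmul, Multiset.coe_sumAddMonoidHom]
  simp [nsmul_eq_mul]

lemma exists_replication {I : Type*} (N n : ℕ) (hd : n ∣ Nat.factorial N) (y : Fin n → I) :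
    ∃ x : Fin (Nat.factorial N) → I, IsReplication N n x y := by
  set m := Nat.factorial N / n with hm
  have hmn : Nat.factorial N = m * n := (Nat.div_mul_cancel hd).symm
  let e : Fin (Nat.factorial N) ≃ Fin m × Fin n := (finCongr hmn).trans finProdFinEquiv.symm
  refine ⟨(y ∘ Prod.snd) ∘ e, ?_⟩
  unfold IsReplication coordMultiset
  calc Multiset.map ((y ∘ Prod.snd) ∘ ⇑e) Finset.univ.val
      = Multiset.map (y ∘ Prod.snd) (Multiset.map ⇑e Finset.univ.val) :=
        (Multiset.map_map _ _ _).symm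
    _ = Multiset.map (y ∘ Prod.snd) (Finset.univ : Finset (Fin m × Fin n)).val := by
        rw [show Multiset.map ⇑e Finset.univ.val = (Finset.map e.toEmbedding Finset.univ).val
          from rfl, Finset.map_univ_equiv]
    _ = Multiset.map y (Multiset.map Prod.snd (Finset.univ : Finset (Fin m × Fin n)).val) :=
        (Multiset.map_map _ _ _).symm
    _ = Multiset.map y (m • (Finset.univ : Finset (Fin n)).val) := by rw [map_snd_univ_val]
    _ = m • Multiset.map y Finset.univ.val := Multiset.map_nsmul _ _ _

lemma s_eq_of_coordMultiset_eq {I : Type*} {n : ℕ} (sn : (Fin n → I) → ℝ)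
    (hsymm : ∀ σ : Equiv.Perm (Fin n), ∀ x : Fin n → I, sn (x ∘ σ) = sn x)
    {y₁ y₂ : Fin n → I} (h : coordMultiset y₁ = coordMultiset y₂) : sn y₁ = sn y₂ := by
  obtain ⟨σ, hσ⟩ := exists_perm_of_coordMultiset_eq y₁ y₂ h
  rw [hσ, hsymm]

/-- **Lemma 6 (`Û = U = ⋂ₙ Uₙ`).**  A function `u ∈ L¹(μ)` satisfies
`∑_{k=1}^{N!} u(x_k) ≥ (N-1)!·S(x)` for all `x ∈ I^{N!}` if and only if
`∑_{k=1}^n u(y_k) ≥ s_n(y)` for every `n ∈ {N',…,N}` and every `y ∈ I^n`. -/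
theorem dual_sets_eq
    {I : Type*} [TopologicalSpace I] [PolishSpace I] [MeasurableSpace I] [BorelSpace I]
    (μ : Measure I) [IsFiniteMeasure μ]
    (N' N : ℕ) (hN' : 2 ≤ N') (hNN : N' ≤ N)
    (s : ∀ n : ℕ, (Fin n → I) → ℝ)
    (hs_nonneg : ∀ n ∈ Finset.Icc N' N, ∀ x : Fin n → I, 0 ≤ s n x)
    (hs_usc : ∀ n ∈ Finset.Icc N' N, UpperSemicontinuous (s n))
    (hs_symm : ∀ n ∈ Finset.Icc N' N, ∀ σ : Equiv.Perm (Fin n), ∀ x : Fin n → I,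
      s n (x ∘ σ) = s n x)
    (u : I → ℝ) (hu : Integrable u μ) :
    (∀ x : Fin (Nat.factorial N) → I,
        (Nat.factorial (N - 1) : ℝ) * bigS s N' N hNN x ≤ ∑ k, u (x k))
      ↔ (∀ n ∈ Finset.Icc N' N, ∀ y : Fin n → I, s n y ≤ ∑ k, u (y k)) := by
  have hNpos : 0 < N := by omega
  have hfac : (Nat.factorial N : ℝ) = (N : ℝ) * (Nat.factorial (N - 1) : ℝ) := by
    rw [show N = (N - 1) + 1 by omega, Nat.factorial_succ]
    push_cast
    ring_nf
  -- key cast identity, for n ∣ N!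
  have hkey : ∀ n : ℕ, 0 < n → n ∣ Nat.factorial N →
      (Nat.factorial (N - 1) : ℝ) * ((N : ℝ) / (n : ℝ)) = ((Nat.factorial N / n : ℕ) : ℝ) := by
    intro n hn hd
    have hn' : (n : ℝ) ≠ 0 := Nat.cast_ne_zero.mpr hn.ne'
    have h1 : ((Nat.factorial N / n : ℕ) : ℝ) = (Nat.factorial N : ℝ) / n := by
      rw [eq_div_iff hn']
      exact_mod_cast Nat.div_mul_cancel hd
    rw [h1, hfac]
    ring
  constructor
  · -- forward
    intro H n hn y
    obtain ⟨hn1, hn2⟩ := Finset.mem_Icc.mp hn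
    have hnpos : 0 < n := by omega
    have hd : n ∣ Nat.factorial N := Nat.dvd_factorial hnpos hn2
    have hmpos : 0 < Nat.factorial N / n :=
      Nat.div_pos (Nat.le_of_dvd N.factorial_pos hd) hnpos
    obtain ⟨x, hrep⟩ := exists_replication N n hd y
    have hex : ∃ y' : Fin n → I, IsReplication N n x y' := ⟨y, hrep⟩
    have hShat : Shat s N n x = s n y := by
      rw [Shat, dif_pos hex]
      exact s_eq_of_coordMultiset_eq (s n) (hs_symm n hn)
        (nsmul_multiset_cancel hmpos.ne'
          ((hex.choose_spec.symm.trans hrep)))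
    have hle : ((N : ℝ) / (n : ℝ)) * Shat s N n x ≤ bigS s N' N hNN x := by
      unfold bigS
      exact Finset.le_sup' (fun n : ℕ => ((N : ℝ) / (n : ℝ)) * Shat s N n x) hn
    have := H x
    rw [sum_of_replication hrep u] at this
    have h2 : (Nat.factorial (N - 1) : ℝ) * (((N : ℝ) / (n : ℝ)) * s n y)
        ≤ ((Nat.factorial N / n : ℕ) : ℝ) * ∑ j, u (y j) := by
      refine le_trans ?_ this
      rw [hShat] at hle
      exact mul_le_mul_of_nonneg_left hle (by positivity)
    rw [← mul_assoc, hkey n hnpos hd] at h2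
    have hmR : (0 : ℝ) < ((Nat.factorial N / n : ℕ) : ℝ) := by exact_mod_cast hmpos
    exact (mul_le_mul_iff_right₀ hmR).mp h2
  · -- backward
    intro H x
    have hupos : ∀ t : I, 0 ≤ u t := by
      intro t
      have := H N' (Finset.mem_Icc.mpr ⟨le_refl _, hNN⟩) (fun _ => t)
      have h0 := hs_nonneg N' (Finset.mem_Icc.mpr ⟨le_refl _, hNN⟩) (fun _ => t)
      simp only [Finset.sum_const, Finset.card_univ, Fintype.card_fin, nsmul_eq_mul] at this
      by_contra hneg
      push_neg at hneg
      have hN'pos : (0 : ℝ) < (N' : ℝ) := by exact_mod_cast (by omega : 0 < N')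
      nlinarith [mul_neg_of_pos_of_neg hN'pos hneg]
    have hBpos : (0 : ℝ) < (Nat.factorial (N - 1) : ℝ) := by
      exact_mod_cast (N - 1).factorial_pos
    unfold bigS
    rw [← le_div_iff₀' hBpos]
    apply Finset.sup'_le
    intro n hn
    rw [le_div_iff₀' hBpos]
    obtain ⟨hn1, hn2⟩ := Finset.mem_Icc.mp hn
    have hnpos : 0 < n := by omega
    have hd : n ∣ Nat.factorial N := Nat.dvd_factorial hnpos hn2
    by_cases hex : ∃ y' : Fin n → I, IsReplication N n x y'
    · have hrep := hex.choose_spec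
      set y := hex.choose with hy
      have hShat : Shat s N n x = s n y := by rw [Shat, dif_pos hex]
      rw [hShat, ← mul_assoc, hkey n hnpos hd]
      rw [sum_of_replication hrep u]
      have hmR : (0 : ℝ) ≤ ((Nat.factorial N / n : ℕ) : ℝ) := by positivity
      exact mul_le_mul_of_nonneg_left (H n hn y) hmR
    · have hShat : Shat s N n x = 0 := by rw [Shat, dif_neg hex]
      rw [hShat, mul_zero, mul_zero]
      exact Finset.sum_nonneg fun k _ => hupos (x k)
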